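/- In the graph M: every vertex has degree 3, M is connected, M is bipartite (admits a proper 2-colouring, given by the parity of the canonical representative), and the girth of M equals 6. (These are the properties of the Möbius–Kantor graph verified for this model.) -/

import Mathlib

/-- The Möbius–Kantor graph, realized as the graph on `ZMod 16` in which
distinct `x, y` are adjacent iff there are `a ∈ {0, 1, 3}` and `v : ZMod 16`
with `v.val` even such that `{x, y} = {v, v + (2a - 1)}`. -/
def MKGraph : SimpleGraph (ZMod 16) where
  Adj x y := x ≠ y ∧ ∃ a ∈ ({0, 1, 3} : Set ℕ), ∃ v : ZMod 16, Even v.val ∧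
    s(x, y) = s(v, v + (2 * (a : ZMod 16) - 1))
  symm := by
    constructor
    rintro x y ⟨hxy, a, ha, v, hv, h⟩
    exact ⟨hxy.symm, a, ha, v, hv, Sym2.eq_swap.trans h⟩
  loopless := by
    constructor
    rintro x ⟨hxx, -⟩
    exact hxx rfl

def MKadj (x y : ZMod 16) : Prop :=
  x ≠ y ∧ ((Even x.val ∧ (y = x + 1 ∨ y = x - 1 ∨ y = x + 5)) ∨
           (Even y.val ∧ (x = y + 1 ∨ x = y - 1 ∨ x = y + 5)))

instance : DecidableRel MKadj := fun x y => by unfold MKadj; infer_instance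

def MKGraph' : SimpleGraph (ZMod 16) where
  Adj := MKadj
  symm := by constructor; rintro x y ⟨h, h2⟩; exact ⟨h.symm, h2.symm⟩
  loopless := by constructor; rintro x ⟨h, -⟩; exact h rfl

instance : DecidableRel MKGraph'.Adj := fun x y => by
  show Decidable (MKadj x y); infer_instance

example : True := trivial

lemma MKeq : MKGraph = MKGraph' := by
  ext x y
  constructor
  · rintro ⟨hne, a, ha, v, hv, hs⟩
    refine ⟨hne, ?_⟩
    rw [Sym2.eq_iff] at hs
    rcases ha with rfl | rfl | rfl <;>
    · norm_num at hs
      rcases hs with ⟨rfl, rfl⟩ | ⟨rfl, rfl⟩ <;>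
        [left; right] <;> refine ⟨hv, by ring_nf; tauto⟩
  · rintro ⟨hne, ⟨hv, h⟩ | ⟨hv, h⟩⟩
    · refine ⟨hne, ?_⟩
      rcases h with rfl | rfl | rfl
      · exact ⟨1, by simp, x, hv, by norm_num⟩
      · exact ⟨0, by simp, x, hv, by norm_num; left; ring⟩
      · exact ⟨3, by simp, x, hv, by norm_num⟩
    · refine ⟨hne, ?_⟩
      rcases h with rfl | rfl | rfl
      · exact ⟨1, by simp, y, hv, by norm_num⟩
      · exact ⟨0, by simp, y, hv, by norm_num; right; ring⟩
      · exact ⟨3, by simp, y, hv, by norm_num⟩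

lemma MKdeg : ∀ v : ZMod 16, (MKGraph'.neighborSet v).ncard = 3 := by
  intro v
  rw [Set.ncard_eq_toFinset_card']
  revert v
  decide

lemma MKparity : ∀ x y : ZMod 16, MKGraph'.Adj x y → x.val % 2 ≠ y.val % 2 := by decide

lemma MKstep : ∀ x : ZMod 16, MKGraph'.Adj x (x + 1) := by decide

lemma MKconn : MKGraph'.Connected := by
  rw [SimpleGraph.connected_iff]
  refine ⟨?_, ⟨0⟩⟩
  have key : ∀ n : ℕ, MKGraph'.Reachable 0 (n : ZMod 16) := by
    intro n
    induction n with
    | zero => exact SimpleGraph.Reachable.refl 0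
    | succ n ih => exact ih.trans (SimpleGraph.Adj.reachable (by push_cast; exact MKstep _))
  intro u v
  have hu := key u.val
  have hv := key v.val
  rw [ZMod.natCast_val, ZMod.cast_id] at hu hv
  exact hu.symm.trans hv

open SimpleGraph in
lemma MKwalkparity {u v : ZMod 16} (w : MKGraph'.Walk u v) :
    (u.val + w.length) % 2 = v.val % 2 := by
  induction w with
  | nil => simp [Nat.add_mod]
  | @cons a b c h p ih =>
    have h1 := MKparity _ _ h
    have h2 : a.val % 2 < 2 := Nat.mod_lt _ (by norm_num)
    have h3 : b.val % 2 < 2 := Nat.mod_lt _ (by norm_num)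
    simp only [SimpleGraph.Walk.length_cons] at *
    omega

lemma MKcommon : ∀ a c : ZMod 16, a = c ∨
    (Finset.univ.filter (fun b => MKGraph'.Adj a b ∧ MKGraph'.Adj c b)).card ≤ 1 := by decide

lemma MKno4 : ∀ a b c d : ZMod 16, ¬(MKGraph'.Adj a b ∧ MKGraph'.Adj b c ∧
    MKGraph'.Adj c d ∧ MKGraph'.Adj d a ∧ a ≠ c ∧ b ≠ d) := by
  rintro a b c d ⟨h1, h2, h3, h4, hac, hbd⟩
  rcases MKcommon a c with h | h
  · exact hac h
  · apply hbd
    refine Finset.card_le_one.mp h b ?_ d ?_ <;> simp [*, h2.symm, h4.symm]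

open SimpleGraph.Walk in
def w6 : MKGraph'.Walk (0:ZMod 16) 0 :=
  cons (show MKGraph'.Adj 0 1 by decide) <|
  cons (show MKGraph'.Adj 1 2 by decide) <|
  cons (show MKGraph'.Adj 2 7 by decide) <|
  cons (show MKGraph'.Adj 7 6 by decide) <|
  cons (show MKGraph'.Adj 6 5 by decide) <|
  cons (show MKGraph'.Adj 5 0 by decide) nil

lemma hw6 : w6.IsCycle := by
  rw [SimpleGraph.Walk.isCycle_def]
  refine ⟨⟨by decide⟩, by simp [w6], by decide⟩

lemma w6len : w6.length = 6 := by simp [w6]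

lemma MKgirth : MKGraph'.girth = 6 := by
  have hnac : ¬ MKGraph'.IsAcyclic := fun h => h w6 hw6
  have hub : MKGraph'.egirth ≤ 6 := by
    have : MKGraph'.egirth ≤ (w6.length : ℕ∞) := by
      apply iInf_le_of_le 0
      apply iInf_le_of_le w6
      exact iInf_le _ hw6
    rwa [w6len] at this
  have hub' : MKGraph'.girth ≤ 6 := by
    have h := ENat.toNat_le_toNat hub (by norm_num)
    simpa [SimpleGraph.girth] using h
  obtain ⟨a, w, hw, hlen⟩ := SimpleGraph.exists_girth_eq_length.mpr hnac
  have heven := MKwalkparity w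
  have h3 := hw.three_le_length
  have hne4 : w.length ≠ 4 := by
    intro h4
    cases w with
    | nil => simp at h4
    | cons h1 p =>
    cases p with
    | nil => simp at h4
    | cons h2 q =>
    cases q with
    | nil => simp at h4
    | cons h3' r =>
    cases r with
    | nil => simp at h4
    | cons h4' s =>
    cases s with
    | cons h5 t => simp [SimpleGraph.Walk.length_cons] at h4
    | nil =>
      have hnd := hw.support_nodup
      simp [SimpleGraph.Walk.support_cons] at hnd
      obtain ⟨⟨hbc, hbd, hba⟩, ⟨hcd, hca⟩, hda⟩ := hnd
      exact MKno4 _ _ _ _ ⟨h1, h2, h3', h4', fun hh => hca hh.symm, hbd⟩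
  omega

theorem stmt_12 :
    (∀ v : ZMod 16, (MKGraph.neighborSet v).ncard = 3) ∧
    MKGraph.Connected ∧
    (∀ x y : ZMod 16, MKGraph.Adj x y → x.val % 2 ≠ y.val % 2) ∧
    MKGraph.girth = 6 := by
  rw [MKeq]
  exact ⟨MKdeg, MKconn, MKparity, MKgirth⟩
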